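/- Let a > 2√3 and define V : ℝ → ℝ by V(x) = (2 + sin(a·log⟨x⟩))·x², where ⟨x⟩ = (1+x²)^{1/2}. Then the set of critical points of V is unbounded: for every M > 0 there exists x ∈ ℝ with |x| > M and V'(x) = 0. -/

import Mathlib

lemma aux_deriv (a x : ℝ) :
    HasDerivAt (fun y : ℝ => (2 + Real.sin (a * Real.log (Real.sqrt (1 + y ^ 2)))) * y ^ 2)
      (x * (a * Real.cos (a * Real.log (Real.sqrt (1 + x ^ 2))) * (x ^ 2 / (1 + x ^ 2))
        + 4 + 2 * Real.sin (a * Real.log (Real.sqrt (1 + x ^ 2))))) x := by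
  have h0 : (0:ℝ) < 1 + x ^ 2 := by positivity
  have hs : Real.sqrt (1 + x ^ 2) ≠ 0 := by positivity
  have h1 : HasDerivAt (fun y : ℝ => 1 + y ^ 2) (2 * x) x := by
    simpa using (hasDerivAt_pow 2 x).const_add 1
  have h2 := h1.sqrt (ne_of_gt h0)
  have h3 := h2.log hs
  have h4 := (((h3.const_mul a).sin).const_add 2).mul (hasDerivAt_pow 2 x)
  convert h4 using 1
  · rfl
  · rfl
  · rfl
  field_simp
  ring_nf
  rw [Real.sq_sqrt h0.le]
  ring

set_option maxHeartbeats 1000000 in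
/-- For `a > 2√3`, the potential `V(x) = (2 + sin(a log⟨x⟩)) x²` has an unbounded set of
critical points. -/
theorem stmt_9 (a : ℝ) (ha : 2 * Real.sqrt 3 < a) :
    ∀ M : ℝ, 0 < M → ∃ x : ℝ, M < |x| ∧
      deriv (fun y : ℝ => (2 + Real.sin (a * Real.log (Real.sqrt (1 + y ^ 2)))) * y ^ 2) x = 0 := by
  intro M hM
  have ha0 : 0 < a := lt_trans (by positivity) ha
  set g : ℝ → ℝ := fun x => a * Real.cos (a * Real.log (Real.sqrt (1 + x ^ 2))) * (x ^ 2 / (1 + x ^ 2))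
        + 4 + 2 * Real.sin (a * Real.log (Real.sqrt (1 + x ^ 2))) with hg_def
  have hgc : Continuous g := by
    rw [hg_def]
    have hθ : Continuous fun x : ℝ => a * Real.log (Real.sqrt (1 + x ^ 2)) := by
      apply Continuous.mul continuous_const
      apply Continuous.log
      · exact Real.continuous_sqrt.comp (by continuity)
      · intro x
        have h1 : (0:ℝ) < 1 + x ^ 2 := by positivity
        positivity
    apply Continuous.add
    apply Continuous.add
    · exact (continuous_const.mul (Real.continuous_cos.comp hθ)).mul
        (Continuous.div (by continuity) (by continuity) (fun x => by positivity))
    · exact continuous_const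
    · exact continuous_const.mul (Real.continuous_sin.comp hθ)
  clear_value g
  set s : ℝ := Real.sqrt (a ^ 2 + 4) with hs_def
  have hs2 : s ^ 2 = a ^ 2 + 4 := Real.sq_sqrt (by positivity)
  have hs0 : 0 < s := Real.sqrt_pos.mpr (by positivity)
  clear_value s
  have hs4 : 4 < s := by
    have h12 : (12:ℝ) < a ^ 2 := by
      have h3 : (2 * Real.sqrt 3) ^ 2 = 12 := by
        rw [mul_pow, Real.sq_sqrt (by norm_num : (3:ℝ) ≥ 0)]; norm_num
      nlinarith [Real.sqrt_nonneg 3]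
    nlinarith
  have hval : 0 ≤ 4 * (s - 1) / (s * (s - 4)) :=
    div_nonneg (by linarith) (by nlinarith)
  set B : ℝ := max M (Real.sqrt (4 * (s - 1) / (s * (s - 4)))) with hB_def
  have hB0 : 0 < B := lt_of_lt_of_le hM (le_max_left _ _)
  have hBM : M ≤ B := le_max_left _ _
  have hBs : 4 * (s - 1) / (s * (s - 4)) ≤ B ^ 2 := by
    have h1 : Real.sqrt (4 * (s - 1) / (s * (s - 4))) ≤ B := le_max_right _ _
    have h2 : Real.sqrt (4 * (s - 1) / (s * (s - 4))) ^ 2 = 4 * (s - 1) / (s * (s - 4)) :=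
      Real.sq_sqrt hval
    nlinarith [Real.sqrt_nonneg (4 * (s - 1) / (s * (s - 4)))]
  clear_value B
  -- choose k
  set T : ℝ := a / 2 * Real.log (1 + B ^ 2) with hT_def
  clear_value T
  obtain ⟨k, hk⟩ := exists_nat_gt (max T 0)
  have hpi := Real.pi_gt_three
  have hkT : T < (k:ℝ) := lt_of_le_of_lt (le_max_left _ _) hk
  have hk0 : (0:ℝ) < (k:ℝ) := lt_of_le_of_lt (le_max_right _ _) hk
  set t₁ : ℝ := Real.pi / 2 + k * (2 * Real.pi) with ht1_def
  set φ : ℝ := Real.arctan (2 / a) with hφ_def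
  have hφ0 : 0 < φ := by
    rw [hφ_def, ← Real.arctan_zero]
    exact Real.arctan_strictMono (by positivity)
  have hφπ : φ < Real.pi / 2 := Real.arctan_lt_pi_div_two _
  set t₂ : ℝ := (Real.pi + φ) + k * (2 * Real.pi) with ht2_def
  clear_value φ t₁ t₂
  have hk2pi : (k:ℝ) ≤ k * (2 * Real.pi) := by nlinarith
  have ht1T : T < t₁ := by rw [ht1_def]; nlinarith
  have ht1pos : 0 < t₁ := by rw [ht1_def]; nlinarith
  have ht12 : t₁ < t₂ := by rw [ht1_def, ht2_def]; nlinarith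
  -- the family of points
  set xf : ℝ → ℝ := fun t => Real.sqrt (Real.exp (2 * t / a) - 1) with hxf_def
  clear_value xf
  have hxf_sq : ∀ t : ℝ, 0 ≤ t → 1 + (xf t) ^ 2 = Real.exp (2 * t / a) := by
    intro t ht
    have he1 : (1:ℝ) ≤ Real.exp (2 * t / a) := by
      rw [show (1:ℝ) = Real.exp 0 by simp]
      exact Real.exp_le_exp.mpr (by positivity)
    rw [hxf_def]; dsimp only
    rw [Real.sq_sqrt (by linarith)]; ring
  have hxf_theta : ∀ t : ℝ, 0 ≤ t → a * Real.log (Real.sqrt (1 + (xf t) ^ 2)) = t := by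
    intro t ht
    rw [hxf_sq t ht, Real.log_sqrt (Real.exp_nonneg _), Real.log_exp]
    field_simp
  have hx12 : xf t₁ ≤ xf t₂ := by
    rw [hxf_def]; dsimp only
    apply Real.sqrt_le_sqrt
    have hdiv : 2 * t₁ / a ≤ 2 * t₂ / a := by
      rw [div_le_div_iff_of_pos_right ha0]; nlinarith
    have := Real.exp_le_exp.mpr hdiv
    linarith
  have hxfB : B < xf t₁ := by
    rw [hxf_def]; dsimp only
    rw [Real.lt_sqrt hB0.le]
    have hlog : Real.log (1 + B ^ 2) < 2 * t₁ / a := by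
      rw [lt_div_iff₀ ha0]
      have h3 : Real.log (1 + B ^ 2) * a = 2 * T := by rw [hT_def]; ring
      linarith
    have h2 := Real.exp_lt_exp.mpr hlog
    rw [Real.exp_log (by positivity)] at h2
    linarith
  -- endpoint values
  have hg1 : g (xf t₁) = 6 := by
    rw [hg_def]; dsimp only
    rw [hxf_theta t₁ ht1pos.le, ht1_def,
        Real.cos_add_nat_mul_two_pi, Real.sin_add_nat_mul_two_pi,
        Real.cos_pi_div_two, Real.sin_pi_div_two]
    ring
  have hg2 : g (xf t₂) < 0 := by
    have hx2B : B < xf t₂ := lt_of_lt_of_le hxfB hx12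
    have hx2pos : 0 < xf t₂ := lt_trans hB0 hx2B
    have hXθ := hxf_theta t₂ (by linarith)
    set X := xf t₂ with hX_def
    clear_value X
    have hXsq : 4 * (s - 1) / (s * (s - 4)) < X ^ 2 := by nlinarith
    have hXsq' : 4 * (s - 1) < s * (s - 4) * X ^ 2 := by
      rw [div_lt_iff₀ (by nlinarith)] at hXsq
      nlinarith
    have h1X : (0:ℝ) < 1 + X ^ 2 := by positivity
    have hu0 : 0 < Real.sqrt (1 + (2 / a) ^ 2) := Real.sqrt_pos.mpr (by positivity)
    have hu_eq : Real.sqrt (1 + (2 / a) ^ 2) = s / a := by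
      rw [eq_div_iff ha0.ne']
      have h1 : (Real.sqrt (1 + (2 / a) ^ 2) * a) ^ 2 = a ^ 2 + 4 := by
        rw [mul_pow, Real.sq_sqrt (by positivity)]; field_simp; ring
      have h2 : Real.sqrt (1 + (2 / a) ^ 2) * a
          = Real.sqrt ((Real.sqrt (1 + (2 / a) ^ 2) * a) ^ 2) :=
        (Real.sqrt_sq (by positivity)).symm
      rw [h2, h1, ← hs_def]
    rw [hg_def]; dsimp only
    rw [hXθ, ht2_def,
        Real.cos_add_nat_mul_two_pi, Real.sin_add_nat_mul_two_pi,
        Real.cos_add, Real.sin_add, Real.cos_pi, Real.sin_pi, hφ_def,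
        Real.cos_arctan, Real.sin_arctan, hu_eq]
    have key : 4 < (a ^ 2 * X ^ 2 + 4 * (1 + X ^ 2)) / (s * (1 + X ^ 2)) := by
      rw [lt_div_iff₀ (mul_pos hs0 h1X)]
      nlinarith [hXsq', hs2]
    have e1 : a * (-1 * (1 / (s / a)) - 0 * (2 / a / (s / a))) * (X ^ 2 / (1 + X ^ 2)) + 4
          + 2 * (0 * (1 / (s / a)) + -1 * (2 / a / (s / a)))
        = 4 - (a ^ 2 * X ^ 2 + 4 * (1 + X ^ 2)) / (s * (1 + X ^ 2)) := by
      field_simp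
      ring
    linarith [e1, key]
  -- intermediate value theorem
  obtain ⟨x, hxmem, hgx⟩ := intermediate_value_Icc' hx12 hgc.continuousOn
    (show (0:ℝ) ∈ Set.Icc (g (xf t₂)) (g (xf t₁)) by
      rw [hg1]; exact ⟨hg2.le, by norm_num⟩)
  have hgx0 : a * Real.cos (a * Real.log (Real.sqrt (1 + x ^ 2))) * (x ^ 2 / (1 + x ^ 2))
      + 4 + 2 * Real.sin (a * Real.log (Real.sqrt (1 + x ^ 2))) = 0 := by
    rw [hg_def] at hgx
    simpa using hgx
  have hMx : M < x := by
    have hx1 : xf t₁ ≤ x := hxmem.1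
    linarith
  refine ⟨x, ?_, ?_⟩
  · rwa [abs_of_pos (lt_trans hM hMx)]
  · rw [(aux_deriv a x).deriv, hgx0, mul_zero]
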